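/- For each fixed realization of the sign sequence (ε₁,...,εₙ) ∈ {−1,+1}ⁿ, the set 𝓔 := {θ ∈ ℝ^d : ‖S₀(θ)‖² ≤ ‖S_ε(θ)‖²} is a convex subset of ℝ^d, and the least-squares estimate θ̂ₙ belongs to 𝓔. -/

import Mathlib

open Matrix

noncomputable section

/-- Squared Euclidean norm of a vector in `ℝ^d`. -/
def spsNormSq {d : ℕ} (v : Fin d → ℝ) : ℝ := ∑ j, v j ^ 2

/-- The vector `(Rₙ^{1/2})⁻¹ (1/n) Σ_t a_t φ_t (Y_t − φ_tᵀθ)`. -/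
def spsVec {d n : ℕ} (φ : Fin n → Fin d → ℝ) (Rhalf : Matrix (Fin d) (Fin d) ℝ)
    (Y : Fin n → ℝ) (a : Fin n → ℝ) (θ : Fin d → ℝ) : Fin d → ℝ :=
  Rhalf⁻¹ *ᵥ ((n : ℝ)⁻¹ • ∑ t, (a t * (Y t - φ t ⬝ᵥ θ)) • φ t)

/-- For each fixed realization of the signs `ε ∈ {−1,+1}ⁿ`, the set
`𝓔 = {θ : ‖S₀(θ)‖² ≤ ‖S_ε(θ)‖²}` is convex and contains the least-squares estimate. -/
theorem E_convex_contains_lse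
    (d n : ℕ) (hn : 0 < n)
    (φ : Fin n → Fin d → ℝ) (Y : Fin n → ℝ)
    (ε : Fin n → ℝ) (hε : ∀ t, ε t = 1 ∨ ε t = -1)
    (Rn : Matrix (Fin d) (Fin d) ℝ)
    (hRn : Rn = (n : ℝ)⁻¹ • ∑ t, vecMulVec (φ t) (φ t))
    (hPD : Rn.PosDef)
    (Rhalf : Matrix (Fin d) (Fin d) ℝ)
    (hRhalfInv : IsUnit Rhalf.det)
    (hfact : Rhalf * Rhalfᵀ = Rn)
    (θhat : Fin d → ℝ)
    (hθhat : θhat = (∑ t, vecMulVec (φ t) (φ t))⁻¹ *ᵥ ∑ t, Y t • φ t) :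
    Convex ℝ {θ : Fin d → ℝ |
        spsNormSq (spsVec φ Rhalf Y (fun _ => 1) θ) ≤ spsNormSq (spsVec φ Rhalf Y ε θ)} ∧
    θhat ∈ {θ : Fin d → ℝ |
        spsNormSq (spsVec φ Rhalf Y (fun _ => 1) θ) ≤ spsNormSq (spsVec φ Rhalf Y ε θ)} := by
  classical
  have hnR : (n : ℝ) ≠ 0 := Nat.cast_ne_zero.mpr hn.ne'
  have hnR0 : (0:ℝ) ≤ (n:ℝ) := Nat.cast_nonneg n
  set M : Matrix (Fin d) (Fin d) ℝ := ∑ t, vecMulVec (φ t) (φ t) with hMdef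
  have hMRn : M = (n : ℝ) • Rn := by
    rw [hRn, smul_smul, mul_inv_cancel₀ hnR, one_smul]
  have hRnUnit : IsUnit Rn.det := isUnit_iff_ne_zero.mpr hPD.det_pos.ne'
  -- the squared norm as a quadratic form w.r.t. Rn⁻¹
  set quad : (Fin d → ℝ) → ℝ := fun v => v ⬝ᵥ (Rn⁻¹ *ᵥ v) with hquaddef
  have hquad0 : ∀ v, 0 ≤ quad v := by
    intro v
    have := hPD.inv.posSemidef.dotProduct_mulVec_nonneg v
    simpa using this
  have hRninvT : Rn⁻¹ᵀ = Rn⁻¹ := by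
    rw [Matrix.transpose_nonsing_inv]
    congr 1
    simpa using hPD.isHermitian.eq
  have hsym : ∀ u v : Fin d → ℝ, u ⬝ᵥ (Rn⁻¹ *ᵥ v) = v ⬝ᵥ (Rn⁻¹ *ᵥ u) := by
    intro u v
    rw [Matrix.dotProduct_mulVec, ← Matrix.mulVec_transpose, hRninvT, dotProduct_comm]
  have hBtB : Rhalf⁻¹ᵀ * Rhalf⁻¹ = Rn⁻¹ := by
    rw [← hfact, Matrix.mul_inv_rev, Matrix.transpose_nonsing_inv]
  have hNS : ∀ w : Fin d → ℝ, spsNormSq w = w ⬝ᵥ w := by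
    intro w; simp [spsNormSq, dotProduct, sq]
  have hNormSq : ∀ v : Fin d → ℝ, spsNormSq (Rhalf⁻¹ *ᵥ v) = quad v := by
    intro v
    rw [hNS, Matrix.dotProduct_mulVec, ← Matrix.mulVec_transpose,
      Matrix.mulVec_mulVec, hBtB, dotProduct_comm, hquaddef]
  -- the affine map inside
  set g : (Fin n → ℝ) → (Fin d → ℝ) → (Fin d → ℝ) :=
    fun a θ => (n : ℝ)⁻¹ • ∑ t, (a t * (Y t - φ t ⬝ᵥ θ)) • φ t with hgdef
  have hFa : ∀ a θ, spsNormSq (spsVec φ Rhalf Y a θ) = quad (g a θ) := by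
    intro a θ; exact hNormSq _
  -- affine combination property
  have hgaff : ∀ (a : Fin n → ℝ) (x y : Fin d → ℝ) (l m : ℝ), l + m = 1 →
      g a (l • x + m • y) = l • g a x + m • g a y := by
    intro a x y l m hlm
    have hcoef : ∀ t, a t * (Y t - φ t ⬝ᵥ (l • x + m • y))
        = l * (a t * (Y t - φ t ⬝ᵥ x)) + m * (a t * (Y t - φ t ⬝ᵥ y)) := by
      intro t
      have h1 : φ t ⬝ᵥ (l • x + m • y) = l * (φ t ⬝ᵥ x) + m * (φ t ⬝ᵥ y) := by
        simp only [dotProduct, Pi.add_apply, Pi.smul_apply, smul_eq_mul, Finset.mul_sum,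
          ← Finset.sum_add_distrib]
        exact Finset.sum_congr rfl fun k _ => by ring
      rw [h1]
      linear_combination (-(a t * Y t)) * hlm
    have hterm : ∀ t, (a t * (Y t - φ t ⬝ᵥ (l • x + m • y))) • φ t
        = l • ((a t * (Y t - φ t ⬝ᵥ x)) • φ t) + m • ((a t * (Y t - φ t ⬝ᵥ y)) • φ t) := by
      intro t; rw [hcoef t, add_smul, smul_smul, smul_smul]
    simp only [hgdef]
    rw [Finset.sum_congr rfl (fun t _ => hterm t), Finset.sum_add_distrib,
      ← Finset.smul_sum, ← Finset.smul_sum, smul_add,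
      smul_comm ((n:ℝ)⁻¹) l, smul_comm ((n:ℝ)⁻¹) m]
  -- quadratic expansions
  have hquadexp : ∀ (u v : Fin d → ℝ) (l m : ℝ),
      quad (l • u + m • v) = l^2 * quad u + 2*l*m*(u ⬝ᵥ (Rn⁻¹ *ᵥ v)) + m^2 * quad v := by
    intro u v l m
    simp only [hquaddef, Matrix.mulVec_add, Matrix.mulVec_smul, dotProduct_add,
      add_dotProduct, dotProduct_smul, smul_dotProduct, smul_eq_mul]
    rw [hsym v u]
    ring
  have hquadsub : ∀ (u v : Fin d → ℝ),
      quad (u - v) = quad u - 2*(u ⬝ᵥ (Rn⁻¹ *ᵥ v)) + quad v := by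
    intro u v
    simp only [hquaddef, Matrix.mulVec_sub, dotProduct_sub, sub_dotProduct]
    rw [hsym v u]
    ring
  have hcomb : ∀ (u v : Fin d → ℝ) (l m : ℝ), l + m = 1 →
      quad (l • u + m • v) = l * quad u + m * quad v - l*m*quad (u - v) := by
    intro u v l m hlm
    rw [hquadexp, hquadsub]
    linear_combination (quad u * l + quad v * m) * hlm
  -- M *ᵥ v as a sum
  have hMv : ∀ v : Fin d → ℝ, M *ᵥ v = ∑ t, (φ t ⬝ᵥ v) • φ t := by
    intro v
    funext j
    simp only [hMdef, Matrix.mulVec, dotProduct, Finset.sum_apply, Matrix.sum_apply,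
      vecMulVec_apply, Finset.sum_mul, Pi.smul_apply, smul_eq_mul, Finset.mul_sum]
    rw [Finset.sum_comm]
    apply Finset.sum_congr rfl
    intro t _
    apply Finset.sum_congr rfl
    intro k _
    ring
  have hsumdot : ∀ (coef : Fin n → ℝ) (v : Fin d → ℝ),
      (∑ t, coef t • φ t) ⬝ᵥ v = ∑ t, coef t * (φ t ⬝ᵥ v) := by
    intro coef v
    have h0 : (∑ t, coef t • φ t) ⬝ᵥ v = ∑ t, (coef t • φ t) ⬝ᵥ v := by
      simp only [dotProduct, Finset.sum_apply, Finset.sum_mul]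
      exact Finset.sum_comm
    rw [h0]
    exact Finset.sum_congr rfl fun t _ => by rw [smul_dotProduct, smul_eq_mul]
  -- key inequality
  have hkey : ∀ z : Fin d → ℝ,
      quad ((n:ℝ)⁻¹ • ∑ t, (ε t * (φ t ⬝ᵥ z)) • φ t)
        ≤ quad ((n:ℝ)⁻¹ • ∑ t, ((1:ℝ) * (φ t ⬝ᵥ z)) • φ t) := by
    intro z
    set c : Fin n → ℝ := fun t => φ t ⬝ᵥ z with hcdef
    set S : ℝ := ∑ t, (c t)^2 with hSdef
    have hS0 : 0 ≤ S := Finset.sum_nonneg fun t _ => sq_nonneg _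
    have hscale : ∀ w : Fin d → ℝ, quad ((n:ℝ)⁻¹ • w) = ((n:ℝ)⁻¹)^2 * quad w := by
      intro w
      simp only [hquaddef, Matrix.mulVec_smul, dotProduct_smul, smul_dotProduct, smul_eq_mul]
      ring
    set q1 : Fin d → ℝ := ∑ t, (c t) • φ t with hq1def
    set qe : Fin d → ℝ := ∑ t, (ε t * c t) • φ t with hqedef
    have hq1M : q1 = M *ᵥ z := (hMv z).symm
    -- quad q1 = n * S
    have hinvq1 : Rn⁻¹ *ᵥ q1 = (n:ℝ) • z := by
      rw [hq1M, hMRn, Matrix.smul_mulVec, Matrix.mulVec_smul, Matrix.mulVec_mulVec,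
        Matrix.nonsing_inv_mul Rn hRnUnit, Matrix.one_mulVec]
    have hdot : ∀ w : Fin d → ℝ, q1 ⬝ᵥ w = ∑ t, c t * (φ t ⬝ᵥ w) := fun w => hsumdot c w
    have hq1quad : quad q1 = (n:ℝ) * S := by
      have h4 : quad q1 = q1 ⬝ᵥ ((n:ℝ) • z) := by rw [hquaddef]; simp only; rw [hinvq1]
      rw [h4, dotProduct_smul, smul_eq_mul, hdot z, hSdef]
      congr 1
      exact Finset.sum_congr rfl fun t _ => (sq (c t)).symm
    -- bound quad qe
    set w : Fin d → ℝ := Rn⁻¹ *ᵥ qe with hwdef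
    set A : ℝ := quad qe with hAdef
    have hA0 : 0 ≤ A := hquad0 qe
    have hAsum : A = ∑ t, (ε t * c t) * (φ t ⬝ᵥ w) := by
      have : A = qe ⬝ᵥ w := rfl
      rw [this, hqedef]
      exact hsumdot (fun t => ε t * c t) w
    have hT : ∑ t, (φ t ⬝ᵥ w)^2 = (n:ℝ) * A := by
      have h1 : M *ᵥ w = (n:ℝ) • qe := by
        rw [hwdef, hMRn, Matrix.smul_mulVec, Matrix.mulVec_mulVec,
          Matrix.mul_nonsing_inv Rn hRnUnit, Matrix.one_mulVec]
      have h2 : (M *ᵥ w) ⬝ᵥ w = ∑ t, (φ t ⬝ᵥ w)^2 := by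
        rw [hMv w, hsumdot (fun t => φ t ⬝ᵥ w) w]
        exact Finset.sum_congr rfl fun t _ => (sq (φ t ⬝ᵥ w)).symm
      have h4 : qe ⬝ᵥ w = A := by rw [hAdef, hquaddef]
      have h3 : (M *ᵥ w) ⬝ᵥ w = (n:ℝ) * A := by
        rw [h1, smul_dotProduct, smul_eq_mul, h4]
      rw [← h2, h3]
    have hCS : A^2 ≤ S * ((n:ℝ) * A) := by
      have h1 : A^2 ≤ (∑ t, (ε t * c t)^2) * (∑ t, (φ t ⬝ᵥ w)^2) := by
        rw [hAsum]
        exact Finset.sum_mul_sq_le_sq_mul_sq Finset.univ _ _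
      have h2 : (∑ t, (ε t * c t)^2) = S := by
        rw [hSdef]
        apply Finset.sum_congr rfl
        intro t _
        rcases hε t with h | h <;> rw [h] <;> ring
      rwa [h2, hT] at h1
    have hAle : A ≤ (n:ℝ) * S := by
      rcases eq_or_lt_of_le hA0 with h | h
      · rw [← h]; positivity
      · have h1 : A * A ≤ ((n:ℝ) * S) * A := by nlinarith [hCS]
        exact le_of_mul_le_mul_right h1 h
    -- put together
    have e1 : quad ((n:ℝ)⁻¹ • ∑ t, (ε t * (φ t ⬝ᵥ z)) • φ t) = ((n:ℝ)⁻¹)^2 * A := by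
      rw [hscale]
    have e2 : quad ((n:ℝ)⁻¹ • ∑ t, ((1:ℝ) * (φ t ⬝ᵥ z)) • φ t) = ((n:ℝ)⁻¹)^2 * ((n:ℝ) * S) := by
      have hsums : (∑ t, ((1:ℝ) * (φ t ⬝ᵥ z)) • φ t) = q1 := by
        rw [hq1def]
        exact Finset.sum_congr rfl fun t _ => by rw [one_mul]
      rw [hsums, hscale, hq1quad]
    rw [e1, e2]
    have : (0:ℝ) ≤ ((n:ℝ)⁻¹)^2 := sq_nonneg _
    exact mul_le_mul_of_nonneg_left hAle this
  -- difference of g's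
  have hgdiff : ∀ (a : Fin n → ℝ) (x y : Fin d → ℝ),
      g a x - g a y = (n:ℝ)⁻¹ • ∑ t, (a t * (φ t ⬝ᵥ (y - x))) • φ t := by
    intro a x y
    simp only [hgdef]
    rw [← smul_sub, ← Finset.sum_sub_distrib]
    congr 1
    apply Finset.sum_congr rfl
    intro t _
    rw [← sub_smul]
    congr 1
    have : φ t ⬝ᵥ (y - x) = φ t ⬝ᵥ y - φ t ⬝ᵥ x := by
      simp [dotProduct, mul_sub, Finset.sum_sub_distrib]
    rw [this]
    ring
  constructor
  · -- convexity
    intro x hx y hy l m hl hm hlm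
    simp only [Set.mem_setOf_eq] at hx hy ⊢
    rw [hFa, hFa] at hx hy ⊢
    rw [hgaff _ x y l m hlm, hgaff _ x y l m hlm, hcomb _ _ _ _ hlm, hcomb _ _ _ _ hlm]
    have hkey' : quad (g ε x - g ε y) ≤ quad (g (fun _ => 1) x - g (fun _ => 1) y) := by
      rw [hgdiff, hgdiff]
      exact hkey (y - x)
    have h1 : l * quad (g (fun _ => 1) x) ≤ l * quad (g ε x) :=
      mul_le_mul_of_nonneg_left hx hl
    have h2 : m * quad (g (fun _ => 1) y) ≤ m * quad (g ε y) :=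
      mul_le_mul_of_nonneg_left hy hm
    have h3 : l * m * quad (g ε x - g ε y) ≤ l * m * quad (g (fun _ => 1) x - g (fun _ => 1) y) :=
      mul_le_mul_of_nonneg_left hkey' (mul_nonneg hl hm)
    linarith
  · -- membership of θhat
    simp only [Set.mem_setOf_eq]
    have hMunit : IsUnit M.det := by
      rw [hMRn, Matrix.det_smul]
      exact isUnit_iff_ne_zero.mpr (mul_ne_zero (pow_ne_zero _ hnR) hPD.det_pos.ne')
    have hnorm : M *ᵥ θhat = ∑ t, Y t • φ t := by
      rw [hθhat, Matrix.mulVec_mulVec, Matrix.mul_nonsing_inv M hMunit,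
        Matrix.one_mulVec]
    have hg0 : g (fun _ => 1) θhat = 0 := by
      have h1 : ∑ t, ((1:ℝ) * (Y t - φ t ⬝ᵥ θhat)) • φ t
          = (∑ t, Y t • φ t) - M *ᵥ θhat := by
        rw [hMv θhat, ← Finset.sum_sub_distrib]
        apply Finset.sum_congr rfl
        intro t _
        rw [one_mul, sub_smul]
      rw [hgdef]
      simp only
      rw [h1, hnorm, sub_self, smul_zero]
    have hzero : spsNormSq (spsVec φ Rhalf Y (fun _ => 1) θhat) = 0 := by
      rw [hFa, hg0]
      simp [hquaddef, Matrix.mulVec_zero]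
    rw [hzero]
    exact Finset.sum_nonneg fun j _ => sq_nonneg _

end
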